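/- arXiv:1609.06881 — 2 statements merged into one kernel-verified Lean document; each statement's English description precedes it below -/
import Mathlib

section
/- With S_0, …, S_8 the octonionic Pauli matrices on ℝ^16, the 36 operators J_{αβ} = S_α ∘ S_β for 0 ≤ α < β ≤ 8 are linearly independent elements of the Lie algebra of skew-adjoint endomorphisms of ℝ^16. -/
noncomputable section

/-- The octonions, realized as the Cayley–Dickson double `ℍ × ℍ` of the quaternions. -/
abbrev Oct : Type := Quaternion ℝ × Quaternion ℝ

/-- Cayley–Dickson multiplication on `𝕆 = ℍ × ℍ`:
`(a,b)·(c,d) = (a c − d̄ b, d a + b c̄)`. -/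
def omul (x y : Oct) : Oct :=
  (x.1 * y.1 - star y.2 * x.2, y.2 * x.1 + x.2 * star y.1)

/-- The real part of an octonion. -/
def oRe (x : Oct) : ℝ := x.1.re

/-- The standard Euclidean inner product on `𝕆 ≅ ℝ^8`, `⟨x,y⟩ = Re (x ȳ)`. -/
def oinner (x y : Oct) : ℝ := (x.1 * star y.1).re + (x.2 * star y.2).re

/-- Right multiplication `R_u : 𝕆 → 𝕆`, `x ↦ x·u`. -/
def Rmul (u : Oct) (x : Oct) : Oct := omul x u

/-- The standard imaginary unit octonions `e_1, …, e_7` (namely `i, j, k, e, f, g, h`). -/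
def imUnit : ℕ → Oct
  | 1 => ((⟨0, 1, 0, 0⟩ : Quaternion ℝ), 0)
  | 2 => ((⟨0, 0, 1, 0⟩ : Quaternion ℝ), 0)
  | 3 => ((⟨0, 0, 0, 1⟩ : Quaternion ℝ), 0)
  | 4 => (0, 1)
  | 5 => (0, (⟨0, 1, 0, 0⟩ : Quaternion ℝ))
  | 6 => (0, (⟨0, 0, 1, 0⟩ : Quaternion ℝ))
  | 7 => (0, (⟨0, 0, 0, 1⟩ : Quaternion ℝ))
  | _ => 0

/-- The nine octonionic Pauli matrices `S_0, …, S_8` acting on `𝕆² ≅ ℝ^16`: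
`S_0(x,y) = (y,x)`, `S_α(x,y) = (−y·e_α, x·e_α)` for `α = 1,…,7`, and `S_8(x,y) = (x,−y)`. -/
def PauliS (α : Fin 9) (p : Oct × Oct) : Oct × Oct :=
  if α.val = 0 then (p.2, p.1)
  else if α.val = 8 then (p.1, -p.2)
  else (-(omul p.2 (imUnit α.val)), omul p.1 (imUnit α.val))

/-- The product inner product on `𝕆² ≅ ℝ^16`. -/
def oinner2 (p q : Oct × Oct) : ℝ := oinner p.1 q.1 + oinner p.2 q.2

/-! ### Basic algebraic lemmas about `omul` -/

lemma omul_add_left (x y u : Oct) : omul (x + y) u = omul x u + omul y u := by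
  simp only [omul]; ext <;> simp <;> ring

lemma omul_smul_left (a : ℝ) (x u : Oct) : omul (a • x) u = a • omul x u := by
  simp only [omul]; ext <;> simp <;> ring

lemma omul_neg_left (x u : Oct) : omul (-x) u = -omul x u := by
  simp only [omul]; ext <;> simp <;> ring

lemma qmk_mul_re (a : Quaternion ℝ) (r i j k : ℝ) : (@HMul.hMul (Quaternion ℝ) (Quaternion ℝ) (Quaternion ℝ) _ a ⟨r, i, j, k⟩).re =
    a.re * r - a.imI * i - a.imJ * j - a.imK * k := Quaternion.re_mul a _
lemma qmk_mul_imI (a : Quaternion ℝ) (r i j k : ℝ) : (@HMul.hMul (Quaternion ℝ) (Quaternion ℝ) (Quaternion ℝ) _ a ⟨r, i, j, k⟩).imI =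
    a.re * i + a.imI * r + a.imJ * k - a.imK * j := Quaternion.imI_mul a _
lemma qmk_mul_imJ (a : Quaternion ℝ) (r i j k : ℝ) : (@HMul.hMul (Quaternion ℝ) (Quaternion ℝ) (Quaternion ℝ) _ a ⟨r, i, j, k⟩).imJ =
    a.re * j - a.imI * k + a.imJ * r + a.imK * i := Quaternion.imJ_mul a _
lemma qmk_mul_imK (a : Quaternion ℝ) (r i j k : ℝ) : (@HMul.hMul (Quaternion ℝ) (Quaternion ℝ) (Quaternion ℝ) _ a ⟨r, i, j, k⟩).imK =
    a.re * k + a.imI * j - a.imJ * i + a.imK * r := Quaternion.imK_mul a _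
lemma qmk_mul_re' (a : Quaternion ℝ) (r i j k : ℝ) : (@HMul.hMul (Quaternion ℝ) (Quaternion ℝ) (Quaternion ℝ) _ ⟨r, i, j, k⟩ a).re =
    r * a.re - i * a.imI - j * a.imJ - k * a.imK := Quaternion.re_mul _ a
lemma qmk_mul_imI' (a : Quaternion ℝ) (r i j k : ℝ) : (@HMul.hMul (Quaternion ℝ) (Quaternion ℝ) (Quaternion ℝ) _ ⟨r, i, j, k⟩ a).imI =
    r * a.imI + i * a.re + j * a.imK - k * a.imJ := Quaternion.imI_mul _ a
lemma qmk_mul_imJ' (a : Quaternion ℝ) (r i j k : ℝ) : (@HMul.hMul (Quaternion ℝ) (Quaternion ℝ) (Quaternion ℝ) _ ⟨r, i, j, k⟩ a).imJ =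
    r * a.imJ - i * a.imK + j * a.re + k * a.imI := Quaternion.imJ_mul _ a
lemma qmk_mul_imK' (a : Quaternion ℝ) (r i j k : ℝ) : (@HMul.hMul (Quaternion ℝ) (Quaternion ℝ) (Quaternion ℝ) _ ⟨r, i, j, k⟩ a).imK =
    r * a.imK + i * a.imJ - j * a.imI + k * a.re := Quaternion.imK_mul _ a
lemma qmk_star (r i j k : ℝ) : @star (Quaternion ℝ) _ ⟨r, i, j, k⟩ = (⟨r, -i, -j, -k⟩ : Quaternion ℝ) :=
  Quaternion.ext _ _ (Quaternion.re_star _) (Quaternion.imI_star _) (Quaternion.imJ_star _) (Quaternion.imK_star _)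


set_option maxHeartbeats 4000000 in
lemma omul_anti (a b : ℕ) (ha : a ≤ 7) (hb : b ≤ 7) (hab : a < b) (x : Oct) :
    omul (omul x (imUnit a)) (imUnit b) = - omul (omul x (imUnit b)) (imUnit a) := by
  interval_cases a <;> interval_cases b <;>
    first
    | omega
    | (simp only [omul, imUnit]; ext <;> simp [qmk_mul_re, qmk_mul_imI, qmk_mul_imJ, qmk_mul_imK, qmk_mul_re', qmk_mul_imI', qmk_mul_imJ', qmk_mul_imK', qmk_star, Quaternion.re_zero, Quaternion.imI_zero, Quaternion.imJ_zero, Quaternion.imK_zero] <;> ring)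

lemma omul_anti' (a b : ℕ) (ha : a ≤ 7) (hb : b ≤ 7) (hab : a ≠ b) (x : Oct) :
    omul (omul x (imUnit a)) (imUnit b) = - omul (omul x (imUnit b)) (imUnit a) := by
  rcases lt_or_gt_of_ne hab with h | h
  · exact omul_anti a b ha hb h x
  · rw [omul_anti b a hb ha h x, neg_neg]

set_option maxHeartbeats 1000000 in
lemma omul_sq (a : ℕ) (ha1 : 1 ≤ a) (ha : a ≤ 7) (x : Oct) :
    omul (omul x (imUnit a)) (imUnit a) = -x := by
  interval_cases a <;> (simp only [omul, imUnit]; ext <;> simp [qmk_mul_re, qmk_mul_imI, qmk_mul_imJ, qmk_mul_imK, qmk_mul_re', qmk_mul_imI', qmk_mul_imJ', qmk_mul_imK', qmk_star, Quaternion.re_zero, Quaternion.imI_zero, Quaternion.imJ_zero, Quaternion.imK_zero] <;> ring)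

/-! ### Lemmas about `oinner` -/

lemma oinner_neg_left (x y : Oct) : oinner (-x) y = -oinner x y := by
  simp [oinner]; ring

lemma oinner_neg_right (x y : Oct) : oinner x (-y) = -oinner x y := by
  simp [oinner]; ring

set_option maxHeartbeats 1000000 in
lemma oinner_omul (a : ℕ) (ha : a ≤ 7) (x y : Oct) :
    oinner (omul x (imUnit a)) y = - oinner x (omul y (imUnit a)) := by
  interval_cases a <;> (simp only [oinner, omul, imUnit] <;> simp [qmk_mul_re, qmk_mul_imI, qmk_mul_imJ, qmk_mul_imK, qmk_mul_re', qmk_mul_imI', qmk_mul_imJ', qmk_mul_imK', qmk_star, Quaternion.re_zero, Quaternion.imI_zero, Quaternion.imJ_zero, Quaternion.imK_zero] <;> ring)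

/-! ### Linearity of the Pauli operators -/

lemma S_add (α : Fin 9) (p q : Oct × Oct) :
    PauliS α (p + q) = PauliS α p + PauliS α q := by
  simp only [PauliS]
  split_ifs <;> (simp [Prod.ext_iff, omul_add_left, neg_add]; try constructor <;> abel)

lemma S_smul (α : Fin 9) (a : ℝ) (p : Oct × Oct) :
    PauliS α (a • p) = a • PauliS α p := by
  simp only [PauliS]
  split_ifs <;> simp [Prod.ext_iff, omul_smul_left]

/-- The Pauli matrices as linear endomorphisms. -/
def Sl (α : Fin 9) : (Oct × Oct) →ₗ[ℝ] (Oct × Oct) where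
  toFun := PauliS α
  map_add' := S_add α
  map_smul' := S_smul α

lemma S_neg (α : Fin 9) (p : Oct × Oct) : PauliS α (-p) = -PauliS α p :=
  map_neg (Sl α) p

lemma Sl_apply (α : Fin 9) (z : Oct × Oct) : Sl α z = PauliS α z := rfl

/-! ### The Clifford relations -/

lemma S_anticomm (a b : Fin 9) (h : a ≠ b) (z : Oct × Oct) :
    PauliS a (PauliS b z) = -(PauliS b (PauliS a z)) := by
  have hv : (a : ℕ) ≠ (b : ℕ) := fun hh => h (Fin.val_injective hh)
  have ha9 : (a : ℕ) < 9 := a.isLt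
  have hb9 : (b : ℕ) < 9 := b.isLt
  by_cases ha0 : (a : ℕ) = 0 <;> by_cases hb0 : (b : ℕ) = 0 <;>
    by_cases ha8 : (a : ℕ) = 8 <;> by_cases hb8 : (b : ℕ) = 8 <;>
      first
      | omega
      | (simp [PauliS, ha0, hb0, ha8, hb8, Prod.ext_iff, omul_neg_left]; done)
      | (have h1 : (a : ℕ) ≤ 7 := by omega
         have h2 : (b : ℕ) ≤ 7 := by omega
         simp [PauliS, ha0, hb0, ha8, hb8, Prod.ext_iff, omul_neg_left,
           omul_anti' (b : ℕ) (a : ℕ) h2 h1 (fun hh => hv hh.symm)])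

lemma S_invol (a : Fin 9) (z : Oct × Oct) : PauliS a (PauliS a z) = z := by
  have ha9 : (a : ℕ) < 9 := a.isLt
  by_cases ha0 : (a : ℕ) = 0 <;> by_cases ha8 : (a : ℕ) = 8 <;>
    first
    | omega
    | (simp [PauliS, ha0, ha8, Prod.ext_iff, omul_neg_left]; done)
    | (have h1 : 1 ≤ (a : ℕ) := by omega
       have h2 : (a : ℕ) ≤ 7 := by omega
       simp [PauliS, ha0, ha8, Prod.ext_iff, omul_neg_left,
         omul_sq (a : ℕ) h1 h2])

lemma S_adj (a : Fin 9) (z w : Oct × Oct) :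
    oinner2 (PauliS a z) w = oinner2 z (PauliS a w) := by
  have ha9 : (a : ℕ) < 9 := a.isLt
  by_cases ha0 : (a : ℕ) = 0 <;> by_cases ha8 : (a : ℕ) = 8 <;>
    first
    | omega
    | (simp [PauliS, ha0, ha8, oinner2, oinner_neg_left, oinner_neg_right];
       try ring
       done)
    | (have h2 : (a : ℕ) ≤ 7 := by omega
       simp [PauliS, ha0, ha8, oinner2, oinner_neg_left, oinner_neg_right,
         oinner_omul (a : ℕ) h2]
       try ring)

lemma oinner2_neg_right (z w : Oct × Oct) : oinner2 z (-w) = -oinner2 z w := by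
  simp [oinner2, oinner_neg_right]; ring

/-! ### Trace computations -/

local notation "T" => LinearMap.trace ℝ (Oct × Oct)

lemma Sl_mul_anti (a b : Fin 9) (h : a ≠ b) : Sl a * Sl b = -(Sl b * Sl a) := by
  apply LinearMap.ext; intro z
  exact S_anticomm a b h z

lemma trace_Sl_mul (a b : Fin 9) (h : a ≠ b) : T (Sl a * Sl b) = 0 := by
  have h1 := LinearMap.trace_mul_comm ℝ (Sl a) (Sl b)
  rw [Sl_mul_anti b a h.symm, map_neg] at h1
  linarith

lemma Sl_move (a b c d : Fin 9) (hba : b ≠ a) (hca : c ≠ a) (hda : d ≠ a) :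
    (Sl b * Sl c * Sl d) * Sl a = -(Sl a * (Sl b * Sl c * Sl d)) := by
  apply LinearMap.ext; intro z
  simp only [Module.End.mul_apply, LinearMap.neg_apply, Sl_apply]
  rw [S_anticomm d a hda, S_neg c, S_anticomm c a hca, neg_neg,
    S_anticomm b a hba]

lemma trace_four (a b c d : Fin 9) (hab : a ≠ b) (hac : a ≠ c) (had : a ≠ d) :
    T (Sl a * Sl b * (Sl c * Sl d)) = 0 := by
  have h1 := LinearMap.trace_mul_comm ℝ (Sl a) (Sl b * Sl c * Sl d)
  rw [Sl_move a b c d hab.symm hac.symm had.symm, map_neg] at h1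
  have e : Sl a * Sl b * (Sl c * Sl d) = Sl a * (Sl b * Sl c * Sl d) := by
    noncomm_ring
  rw [e]
  linarith

lemma trace_JJ (a b c d : Fin 9) (hab : a < b) (hcd : c < d)
    (hne : (a, b) ≠ (c, d)) : T (Sl a * Sl b * (Sl c * Sl d)) = 0 := by
  by_cases hbc : b = c
  · subst hbc
    have e : Sl a * Sl b * (Sl b * Sl d) = Sl a * Sl d := by
      apply LinearMap.ext; intro z
      simp only [Module.End.mul_apply, Sl_apply]
      rw [S_invol]
    rw [e]; exact trace_Sl_mul a d (hab.trans hcd).ne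
  by_cases hbd : b = d
  · subst hbd
    have hac : a ≠ c := fun hh => hne (by rw [hh])
    have hcb : c ≠ b := hcd.ne
    have e : Sl a * Sl b * (Sl c * Sl b) = -(Sl a * Sl c) := by
      apply LinearMap.ext; intro z
      simp only [Module.End.mul_apply, LinearMap.neg_apply, Sl_apply]
      rw [S_anticomm c b hcb, S_neg b, S_invol b, S_neg a]
    rw [e, map_neg, trace_Sl_mul a c hac, neg_zero]
  by_cases hac : a = c
  · subst hac
    have hbd' : b ≠ d := hbd
    have e : Sl a * Sl b * (Sl a * Sl d) = -(Sl b * Sl d) := by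
      apply LinearMap.ext; intro z
      simp only [Module.End.mul_apply, LinearMap.neg_apply, Sl_apply]
      rw [S_anticomm b a hab.ne', S_neg a, S_invol a]
    rw [e, map_neg, trace_Sl_mul b d hbd', neg_zero]
  by_cases had : a = d
  · have hca : c ≠ a := by rw [had]; exact hcd.ne
    have hbc' : b ≠ c := by
      have : c < b := lt_trans (had ▸ hcd : c < a) hab
      exact this.ne'
    subst had
    have e : Sl a * Sl b * (Sl c * Sl a) = Sl b * Sl c := by
      apply LinearMap.ext; intro z
      simp only [Module.End.mul_apply, Sl_apply]
      rw [S_anticomm c a hca, S_neg b, S_neg a, S_anticomm b a hab.ne',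
        S_neg a, neg_neg, S_invol a]
    rw [e]; exact trace_Sl_mul b c hbc'
  · exact trace_four a b c d hab.ne hac had

lemma finrank16 : Module.finrank ℝ (Oct × Oct) = 16 := by
  have h4 : Module.finrank ℝ (Quaternion ℝ) = 4 := Quaternion.finrank_eq_four
  rw [Module.finrank_prod, Module.finrank_prod, h4]

lemma trace_JJ_diag (a b : Fin 9) (hab : a ≠ b) :
    T (Sl a * Sl b * (Sl a * Sl b)) = -16 := by
  have e : Sl a * Sl b * (Sl a * Sl b) = -1 := by
    apply LinearMap.ext; intro z
    simp only [Module.End.mul_apply, LinearMap.neg_apply, Module.End.one_apply, Sl_apply]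
    rw [S_anticomm a b hab, S_invol a, S_invol b]
  rw [e, map_neg, LinearMap.trace_one, finrank16]
  norm_num

/-- Coercion of endomorphisms to plain functions, as a linear map. -/
def coeFnLin : (Module.End ℝ (Oct × Oct)) →ₗ[ℝ] ((Oct × Oct) → (Oct × Oct)) where
  toFun := fun f => ⇑f
  map_add' := fun f g => rfl
  map_smul' := fun c f => rfl

lemma coeFnLin_ker : LinearMap.ker coeFnLin = ⊥ := by
  rw [LinearMap.ker_eq_bot]
  intro f g hfg
  exact LinearMap.ext (congrFun hfg)

/-! ### Main theorem -/

/-- The 36 operators `J_{αβ} = S_α ∘ S_β` for `0 ≤ α < β ≤ 8` are linearly independent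
elements of the space of skew-adjoint endomorphisms of `ℝ^16`. -/
theorem Jab_linearIndependent_skewAdjoint :
    LinearIndependent ℝ
      (fun p : {p : Fin 9 × Fin 9 // p.1 < p.2} =>
        (fun z => PauliS p.1.1 (PauliS p.1.2 z) : Oct × Oct → Oct × Oct)) ∧
    (∀ p : {p : Fin 9 × Fin 9 // p.1 < p.2}, ∀ z w : Oct × Oct,
      oinner2 (PauliS p.1.1 (PauliS p.1.2 z)) w
        = - oinner2 z (PauliS p.1.1 (PauliS p.1.2 w))) := by
  constructor
  · -- linear independence
    have hJ : LinearIndependent ℝ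
        (fun p : {p : Fin 9 × Fin 9 // p.1 < p.2} => Sl p.1.1 * Sl p.1.2) := by
      rw [Fintype.linearIndependent_iff]
      intro g hg p
      have h0 : T ((Sl p.1.1 * Sl p.1.2) *
          ∑ q : {p : Fin 9 × Fin 9 // p.1 < p.2}, g q • (Sl q.1.1 * Sl q.1.2)) = 0 := by
        rw [hg, mul_zero, map_zero]
      rw [Finset.mul_sum] at h0
      simp only [mul_smul_comm, map_sum, map_smul, smul_eq_mul] at h0
      rw [Finset.sum_eq_single p] at h0
      · rw [trace_JJ_diag p.1.1 p.1.2 p.2.ne] at h0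
        linarith
      · intro q _ hqp
        rw [trace_JJ p.1.1 p.1.2 q.1.1 q.1.2 p.2 q.2
          (fun hh => hqp (Subtype.ext hh.symm)), mul_zero]
      · intro hp; exact absurd (Finset.mem_univ p) hp
    exact hJ.map' coeFnLin coeFnLin_ker
  · -- skew-adjointness
    rintro ⟨⟨a, b⟩, hab⟩ z w
    simp only at hab ⊢
    calc oinner2 (PauliS a (PauliS b z)) w
        = oinner2 (PauliS b z) (PauliS a w) := S_adj a _ _
      _ = oinner2 z (PauliS b (PauliS a w)) := S_adj b _ _
      _ = - oinner2 z (PauliS a (PauliS b w)) := by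
          rw [S_anticomm b a hab.ne', oinner2_neg_right]

end
end

section
/- For the 5×5 skew-symmetric matrix ψ of Kähler 2-forms ψ_{αβ} associated to the quaternionic Pauli matrices on ℝ^8 (ψ_{αβ}(X,Y) = ⟨(S_α∘S_β)X, Y⟩ for α<β, extended skew-symmetrically, with values in Λ²ℝ^8), the coefficient τ₂(ψ) of t³ in the characteristic polynomial det(tI − ψ) computed in the exterior algebra equals −2(ω_{L_i}² + ω_{L_j}² + ω_{L_k}²), where ω_{L_i}, ω_{L_j}, ω_{L_k} are the Kähler forms of the three left quaternionic complex structures on ℍ² ≅ ℝ^8. -/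
noncomputable section

/-- `ℍ² ≅ ℝ^8`. -/
abbrev H2 : Type := Quaternion ℝ × Quaternion ℝ

/-- The Euclidean inner product on `ℍ`, `⟨x,y⟩ = Re (x ȳ)`. -/
def qinner (x y : Quaternion ℝ) : ℝ := (x * star y).re

/-- The product inner product on `ℍ² ≅ ℝ^8`. -/
def hinner (p q : H2) : ℝ := qinner p.1 q.1 + qinner p.2 q.2

/-- The basic quaternion units `i, j, k` (for `n = 1, 2, 3`). -/
def qUnit : ℕ → Quaternion ℝ
  | 1 => ⟨0, 1, 0, 0⟩
  | 2 => ⟨0, 0, 1, 0⟩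
  | 3 => ⟨0, 0, 0, 1⟩
  | _ => 0

/-- The five quaternionic Pauli matrices on `ℍ² ≅ ℝ^8`. -/
def hPauli (α : Fin 5) (p : H2) : H2 :=
  if α.val = 0 then (p.2, p.1)
  else if α.val = 4 then (p.1, -p.2)
  else (-(p.2 * qUnit α.val), p.1 * qUnit α.val)

/-- The matrix of Kähler 2-forms `ψ_{αβ}(X,Y) = ⟨(S_α ∘ S_β) X, Y⟩`. -/
def hpsi (α β : Fin 5) (X Y : H2) : ℝ := hinner (hPauli α (hPauli β X)) Y

/-- The wedge product of two 2-forms, as a 4-form on `ℝ^8` (shuffle formula). -/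
def wedge2 (a b : H2 → H2 → ℝ) (X : Fin 4 → H2) : ℝ :=
    a (X 0) (X 1) * b (X 2) (X 3) - a (X 0) (X 2) * b (X 1) (X 3)
  + a (X 0) (X 3) * b (X 1) (X 2) + a (X 1) (X 2) * b (X 0) (X 3)
  - a (X 1) (X 3) * b (X 0) (X 2) + a (X 2) (X 3) * b (X 0) (X 1)

/-- The Kähler 2-form `ω_{L_u}(X,Y) = ⟨L_u X, Y⟩` of the left multiplication by a
quaternion unit `u` on `ℍ²`. -/
def omegaL (u : Quaternion ℝ) (X Y : H2) : ℝ := hinner (u * X.1, u * X.2) Y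

lemma qU1 : (qUnit 1).re = 0 ∧ (qUnit 1).imI = 1 ∧ (qUnit 1).imJ = 0 ∧ (qUnit 1).imK = 0 :=
  ⟨rfl, rfl, rfl, rfl⟩
lemma qU2 : (qUnit 2).re = 0 ∧ (qUnit 2).imI = 0 ∧ (qUnit 2).imJ = 1 ∧ (qUnit 2).imK = 0 :=
  ⟨rfl, rfl, rfl, rfl⟩
lemma qU3 : (qUnit 3).re = 0 ∧ (qUnit 3).imI = 0 ∧ (qUnit 3).imJ = 0 ∧ (qUnit 3).imK = 1 :=
  ⟨rfl, rfl, rfl, rfl⟩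
lemma finv0 : ((0:Fin 5) : ℕ) = 0 := rfl
lemma finv1 : ((1:Fin 5) : ℕ) = 1 := rfl
lemma finv2 : ((2:Fin 5) : ℕ) = 2 := rfl
lemma finv3 : ((3:Fin 5) : ℕ) = 3 := rfl
lemma finv4 : ((4:Fin 5) : ℕ) = 4 := rfl

lemma hpsi_01 (X Y : H2) : hpsi 0 1 X Y = -X.1.imI * Y.1.re - X.1.imJ * Y.1.imK + X.1.imK * Y.1.imJ + X.1.re * Y.1.imI + X.2.imI * Y.2.re + X.2.imJ * Y.2.imK - X.2.imK * Y.2.imJ - X.2.re * Y.2.imI := by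
  simp [finv0, finv1, finv2, finv3, finv4, hpsi, hPauli, hinner, qinner, qU1, qU2, qU3, omegaL, Quaternion.re_mul,
    Quaternion.imI_mul, Quaternion.imJ_mul, Quaternion.imK_mul, Quaternion.re_star,
    Quaternion.imI_star, Quaternion.imJ_star, Quaternion.imK_star]
  ring

lemma hpsi_02 (X Y : H2) : hpsi 0 2 X Y = X.1.imI * Y.1.imK - X.1.imJ * Y.1.re - X.1.imK * Y.1.imI + X.1.re * Y.1.imJ - X.2.imI * Y.2.imK + X.2.imJ * Y.2.re + X.2.imK * Y.2.imI - X.2.re * Y.2.imJ := by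
  simp [finv0, finv1, finv2, finv3, finv4, hpsi, hPauli, hinner, qinner, qU1, qU2, qU3, omegaL, Quaternion.re_mul,
    Quaternion.imI_mul, Quaternion.imJ_mul, Quaternion.imK_mul, Quaternion.re_star,
    Quaternion.imI_star, Quaternion.imJ_star, Quaternion.imK_star]
  ring

lemma hpsi_03 (X Y : H2) : hpsi 0 3 X Y = -X.1.imI * Y.1.imJ + X.1.imJ * Y.1.imI - X.1.imK * Y.1.re + X.1.re * Y.1.imK + X.2.imI * Y.2.imJ - X.2.imJ * Y.2.imI + X.2.imK * Y.2.re - X.2.re * Y.2.imK := by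
  simp [finv0, finv1, finv2, finv3, finv4, hpsi, hPauli, hinner, qinner, qU1, qU2, qU3, omegaL, Quaternion.re_mul,
    Quaternion.imI_mul, Quaternion.imJ_mul, Quaternion.imK_mul, Quaternion.re_star,
    Quaternion.imI_star, Quaternion.imJ_star, Quaternion.imK_star]
  ring

lemma hpsi_04 (X Y : H2) : hpsi 0 4 X Y = X.1.imI * Y.2.imI + X.1.imJ * Y.2.imJ + X.1.imK * Y.2.imK + X.1.re * Y.2.re - X.2.imI * Y.1.imI - X.2.imJ * Y.1.imJ - X.2.imK * Y.1.imK - X.2.re * Y.1.re := by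
  simp [finv0, finv1, finv2, finv3, finv4, hpsi, hPauli, hinner, qinner, qU1, qU2, qU3, omegaL, Quaternion.re_mul,
    Quaternion.imI_mul, Quaternion.imJ_mul, Quaternion.imK_mul, Quaternion.re_star,
    Quaternion.imI_star, Quaternion.imJ_star, Quaternion.imK_star]
  ring

lemma hpsi_12 (X Y : H2) : hpsi 1 2 X Y = -X.1.imI * Y.1.imJ + X.1.imJ * Y.1.imI - X.1.imK * Y.1.re + X.1.re * Y.1.imK - X.2.imI * Y.2.imJ + X.2.imJ * Y.2.imI - X.2.imK * Y.2.re + X.2.re * Y.2.imK := by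
  simp [finv0, finv1, finv2, finv3, finv4, hpsi, hPauli, hinner, qinner, qU1, qU2, qU3, omegaL, Quaternion.re_mul,
    Quaternion.imI_mul, Quaternion.imJ_mul, Quaternion.imK_mul, Quaternion.re_star,
    Quaternion.imI_star, Quaternion.imJ_star, Quaternion.imK_star]
  ring

lemma hpsi_13 (X Y : H2) : hpsi 1 3 X Y = -X.1.imI * Y.1.imK + X.1.imJ * Y.1.re + X.1.imK * Y.1.imI - X.1.re * Y.1.imJ - X.2.imI * Y.2.imK + X.2.imJ * Y.2.re + X.2.imK * Y.2.imI - X.2.re * Y.2.imJ := by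
  simp [finv0, finv1, finv2, finv3, finv4, hpsi, hPauli, hinner, qinner, qU1, qU2, qU3, omegaL, Quaternion.re_mul,
    Quaternion.imI_mul, Quaternion.imJ_mul, Quaternion.imK_mul, Quaternion.re_star,
    Quaternion.imI_star, Quaternion.imJ_star, Quaternion.imK_star]
  ring

lemma hpsi_14 (X Y : H2) : hpsi 1 4 X Y = -X.1.imI * Y.2.re - X.1.imJ * Y.2.imK + X.1.imK * Y.2.imJ + X.1.re * Y.2.imI - X.2.imI * Y.1.re - X.2.imJ * Y.1.imK + X.2.imK * Y.1.imJ + X.2.re * Y.1.imI := by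
  simp [finv0, finv1, finv2, finv3, finv4, hpsi, hPauli, hinner, qinner, qU1, qU2, qU3, omegaL, Quaternion.re_mul,
    Quaternion.imI_mul, Quaternion.imJ_mul, Quaternion.imK_mul, Quaternion.re_star,
    Quaternion.imI_star, Quaternion.imJ_star, Quaternion.imK_star]
  ring

lemma hpsi_23 (X Y : H2) : hpsi 2 3 X Y = -X.1.imI * Y.1.re - X.1.imJ * Y.1.imK + X.1.imK * Y.1.imJ + X.1.re * Y.1.imI - X.2.imI * Y.2.re - X.2.imJ * Y.2.imK + X.2.imK * Y.2.imJ + X.2.re * Y.2.imI := by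
  simp [finv0, finv1, finv2, finv3, finv4, hpsi, hPauli, hinner, qinner, qU1, qU2, qU3, omegaL, Quaternion.re_mul,
    Quaternion.imI_mul, Quaternion.imJ_mul, Quaternion.imK_mul, Quaternion.re_star,
    Quaternion.imI_star, Quaternion.imJ_star, Quaternion.imK_star]
  ring

lemma hpsi_24 (X Y : H2) : hpsi 2 4 X Y = X.1.imI * Y.2.imK - X.1.imJ * Y.2.re - X.1.imK * Y.2.imI + X.1.re * Y.2.imJ + X.2.imI * Y.1.imK - X.2.imJ * Y.1.re - X.2.imK * Y.1.imI + X.2.re * Y.1.imJ := by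
  simp [finv0, finv1, finv2, finv3, finv4, hpsi, hPauli, hinner, qinner, qU1, qU2, qU3, omegaL, Quaternion.re_mul,
    Quaternion.imI_mul, Quaternion.imJ_mul, Quaternion.imK_mul, Quaternion.re_star,
    Quaternion.imI_star, Quaternion.imJ_star, Quaternion.imK_star]
  ring

lemma hpsi_34 (X Y : H2) : hpsi 3 4 X Y = -X.1.imI * Y.2.imJ + X.1.imJ * Y.2.imI - X.1.imK * Y.2.re + X.1.re * Y.2.imK - X.2.imI * Y.1.imJ + X.2.imJ * Y.1.imI - X.2.imK * Y.1.re + X.2.re * Y.1.imK := by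
  simp [finv0, finv1, finv2, finv3, finv4, hpsi, hPauli, hinner, qinner, qU1, qU2, qU3, omegaL, Quaternion.re_mul,
    Quaternion.imI_mul, Quaternion.imJ_mul, Quaternion.imK_mul, Quaternion.re_star,
    Quaternion.imI_star, Quaternion.imJ_star, Quaternion.imK_star]
  ring

lemma omegaL_1 (X Y : H2) : omegaL (qUnit 1) X Y = -X.1.imI * Y.1.re + X.1.imJ * Y.1.imK - X.1.imK * Y.1.imJ + X.1.re * Y.1.imI - X.2.imI * Y.2.re + X.2.imJ * Y.2.imK - X.2.imK * Y.2.imJ + X.2.re * Y.2.imI := by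
  simp [finv0, finv1, finv2, finv3, finv4, hpsi, hPauli, hinner, qinner, qU1, qU2, qU3, omegaL, Quaternion.re_mul,
    Quaternion.imI_mul, Quaternion.imJ_mul, Quaternion.imK_mul, Quaternion.re_star,
    Quaternion.imI_star, Quaternion.imJ_star, Quaternion.imK_star]
  ring

lemma omegaL_2 (X Y : H2) : omegaL (qUnit 2) X Y = -X.1.imI * Y.1.imK - X.1.imJ * Y.1.re + X.1.imK * Y.1.imI + X.1.re * Y.1.imJ - X.2.imI * Y.2.imK - X.2.imJ * Y.2.re + X.2.imK * Y.2.imI + X.2.re * Y.2.imJ := by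
  simp [finv0, finv1, finv2, finv3, finv4, hpsi, hPauli, hinner, qinner, qU1, qU2, qU3, omegaL, Quaternion.re_mul,
    Quaternion.imI_mul, Quaternion.imJ_mul, Quaternion.imK_mul, Quaternion.re_star,
    Quaternion.imI_star, Quaternion.imJ_star, Quaternion.imK_star]
  ring

lemma omegaL_3 (X Y : H2) : omegaL (qUnit 3) X Y = X.1.imI * Y.1.imJ - X.1.imJ * Y.1.imI - X.1.imK * Y.1.re + X.1.re * Y.1.imK + X.2.imI * Y.2.imJ - X.2.imJ * Y.2.imI - X.2.imK * Y.2.re + X.2.re * Y.2.imK := by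
  simp [finv0, finv1, finv2, finv3, finv4, hpsi, hPauli, hinner, qinner, qU1, qU2, qU3, omegaL, Quaternion.re_mul,
    Quaternion.imI_mul, Quaternion.imJ_mul, Quaternion.imK_mul, Quaternion.re_star,
    Quaternion.imI_star, Quaternion.imJ_star, Quaternion.imK_star]
  ring

/-- For the `5×5` skew-symmetric matrix `ψ` of Kähler 2-forms of the quaternionic Pauli
matrices on `ℝ^8`, the coefficient `τ₂(ψ) = Σ_{α<β} ψ_{αβ} ∧ ψ_{αβ}` of `t³` in
`det(tI − ψ)` equals `−2(ω_{L_i}² + ω_{L_j}² + ω_{L_k}²)`. -/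
theorem tau2_eq_neg_two_quaternionic_four_form :
    ∀ X : Fin 4 → H2,
      (∑ α : Fin 5, ∑ β : Fin 5, if α < β then wedge2 (hpsi α β) (hpsi α β) X else 0)
        = -2 * (wedge2 (omegaL (qUnit 1)) (omegaL (qUnit 1)) X
              + wedge2 (omegaL (qUnit 2)) (omegaL (qUnit 2)) X
              + wedge2 (omegaL (qUnit 3)) (omegaL (qUnit 3)) X) := by
  intro X
  simp only [Fin.sum_univ_five, Fin.isValue, Fin.reduceLT, if_true, if_false, reduceIte,
    wedge2, hpsi_01, hpsi_02, hpsi_03, hpsi_04, hpsi_12, hpsi_13, hpsi_14, hpsi_23,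
    hpsi_24, hpsi_34, omegaL_1, omegaL_2, omegaL_3, add_zero, zero_add]
  ring
end
end
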